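/- Let Ω be a finite set with |Ω| ≥ 4096 and let G be a primitive 2-closed permutation group on Ω with exactly 4 orbits on Ω × Ω which is not the automorphism group of any graph or digraph (for every binary relation E on Ω, Aut(E) ≠ G). Then for every nontrivial orbital O of G, the group Aut(O) (where O is regarded as a binary relation on Ω) is a primitive permutation group on Ω having exactly 3 orbits on Ω × Ω. -/
import Mathlib


open MulAction

section Defs

variable {Ω : Type*}

/-- The automorphism group of a binary relation (digraph) `E` on `Ω`. -/
def AutRel (E : Ω → Ω → Prop) : Subgroup (Equiv.Perm Ω) where
  carrier := {σ | ∀ a b : Ω, E a b ↔ E (σ a) (σ b)}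
  one_mem' := by intro a b; simp
  mul_mem' := by
    intro σ τ hσ hτ a b
    simpa using (hτ a b).trans (hσ (τ a) (τ b))
  inv_mem' := by
    intro σ hσ a b
    simpa using (hσ (σ⁻¹ a) (σ⁻¹ b)).symm

/-- The 2-closure of a permutation group `G ≤ Sym(Ω)`: the group of all permutations
preserving every orbit of `G` on `Ω × Ω` (acting coordinatewise). -/
def twoClosure (G : Subgroup (Equiv.Perm Ω)) : Subgroup (Equiv.Perm Ω) where
  carrier := {σ | ∀ x : Ω × Ω, σ • x ∈ MulAction.orbit G x}
  one_mem' := by intro x; simp [MulAction.mem_orbit_self x]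
  mul_mem' := by
    intro σ τ hσ hτ x
    have h1 : τ • x ∈ MulAction.orbit G x := hτ x
    have h2 : σ • (τ • x) ∈ MulAction.orbit G (τ • x) := hσ (τ • x)
    rw [MulAction.orbit_eq_iff.mpr h1] at h2
    simpa [mul_smul] using h2
  inv_mem' := by
    intro σ hσ x
    have h : σ • (σ⁻¹ • x) ∈ MulAction.orbit G (σ⁻¹ • x) := hσ (σ⁻¹ • x)
    simp only [smul_inv_smul] at h
    exact MulAction.mem_orbit_symm.mp h

/-- A permutation group `G ≤ Sym(Ω)` is primitive if it is transitive on `Ω` and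
every block of its action is trivial. -/
def IsPrimitivePerm (G : Subgroup (Equiv.Perm Ω)) : Prop :=
  MulAction.IsPretransitive G Ω ∧
    ∀ B : Set Ω, MulAction.IsBlock G B → MulAction.IsTrivialBlock B

/-- The rank of a permutation group: the number of orbits on `Ω × Ω`. -/
noncomputable def permRank (G : Subgroup (Equiv.Perm Ω)) : ℕ :=
  Nat.card (MulAction.orbitRel.Quotient G (Ω × Ω))

end Defs


section Aux

open MulAction

variable {Ω : Type*}

lemma mem_autRel_iff {E : Ω → Ω → Prop} {σ : Equiv.Perm Ω} :
    σ ∈ AutRel E ↔ ∀ a b : Ω, E a b ↔ E (σ a) (σ b) := Iff.rfl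

lemma mem_twoClosure_iff {G : Subgroup (Equiv.Perm Ω)} {σ : Equiv.Perm Ω} :
    σ ∈ twoClosure G ↔ ∀ x : Ω × Ω, σ • x ∈ MulAction.orbit G x := Iff.rfl

lemma smul_mem_orbit_iff'' {G : Type*} [Group G] {X : Type*} [MulAction G X] (g : G) {p x : X} :
    g • p ∈ orbit G x ↔ p ∈ orbit G x := by
  constructor
  · rintro ⟨h, hh⟩
    exact ⟨g⁻¹ * h, by simp only []; rw [mul_smul]; simp only at hh; rw [hh, inv_smul_smul]⟩
  · rintro ⟨h, hh⟩
    exact ⟨g * h, by simp only []; rw [mul_smul]; simp only at hh; rw [hh]⟩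

lemma orbit_mono' {G A : Subgroup (Equiv.Perm Ω)} (h : G ≤ A) (p : Ω × Ω) :
    orbit G p ⊆ orbit A p := by
  rintro q ⟨g, rfl⟩
  exact ⟨⟨(g : Equiv.Perm Ω), h g.2⟩, rfl⟩

lemma diag_smul_mem {H : Subgroup (Equiv.Perm Ω)} {b : Ω} {p : Ω × Ω}
    (hp : p ∈ orbit H ((b, b) : Ω × Ω)) : p.1 = p.2 := by
  rcases hp with ⟨g, rfl⟩
  rfl

lemma offdiag_smul_mem {H : Subgroup (Equiv.Perm Ω)} {q p : Ω × Ω}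
    (hp : p ∈ orbit H q) (hq : q.1 ≠ q.2) : p.1 ≠ p.2 := by
  rcases hp with ⟨g, rfl⟩
  intro h
  exact hq ((g : Equiv.Perm Ω).injective h)

end Aux

/-- For a primitive 2-closed rank-4 group of degree at least 4096 that is not the
automorphism group of any graph or digraph, the automorphism group of every nontrivial
orbital digraph is primitive of rank 3. -/
theorem aut_orbital_primitive_rank_three {Ω : Type*} [Fintype Ω]
    (hcard : 4096 ≤ Fintype.card Ω) (G : Subgroup (Equiv.Perm Ω))
    (hprim : IsPrimitivePerm G) (hclosed : twoClosure G = G)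
    (hrank : permRank G = 4)
    (hnotaut : ∀ E : Ω → Ω → Prop, AutRel E ≠ G) :
    ∀ O : Set (Ω × Ω), (∃ x : Ω × Ω, O = MulAction.orbit G x) →
      (∀ a : Ω, (a, a) ∉ O) →
      IsPrimitivePerm (AutRel (fun a b => (a, b) ∈ O)) ∧
        permRank (AutRel (fun a b => (a, b) ∈ O)) = 3 := by
  classical
  intro O hO hdiag
  obtain ⟨x, rfl⟩ := hO
  obtain ⟨x1, x2⟩ := x
  have hpos : 0 < Fintype.card Ω := lt_of_lt_of_le (by norm_num) hcard
  obtain ⟨a₀⟩ : Nonempty Ω := Fintype.card_pos_iff.mp hpos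
  set A := AutRel (fun a b => (a, b) ∈ orbit G ((x1, x2) : Ω × Ω)) with hAdef
  have htrans : IsPretransitive G Ω := hprim.1
  -- G ≤ A
  have hGA : G ≤ A := by
    intro σ hσ
    rw [hAdef, mem_autRel_iff]
    intro a b
    have := smul_mem_orbit_iff'' (G := G) (⟨σ, hσ⟩ : G) (p := ((a, b) : Ω × Ω))
      (x := ((x1, x2) : Ω × Ω))
    exact this.symm
  -- A preserves the orbital
  have hAinv : ∀ σ : Equiv.Perm Ω, σ ∈ A → ∀ p : Ω × Ω,
      (σ • p ∈ orbit G ((x1, x2) : Ω × Ω) ↔ p ∈ orbit G ((x1, x2) : Ω × Ω)) := by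
    intro σ hσ p
    rw [hAdef, mem_autRel_iff] at hσ
    exact (hσ p.1 p.2).symm
  have hAsub : ∀ p : Ω × Ω, p ∈ orbit G ((x1, x2) : Ω × Ω) →
      orbit A p ⊆ orbit G ((x1, x2) : Ω × Ω) := by
    rintro p hp q ⟨⟨σ, hσ⟩, rfl⟩
    exact (hAinv σ hσ p).mpr hp
  -- the diagonal orbit
  have hdiagOrb : ∀ b c : Ω, ((c, c) : Ω × Ω) ∈ orbit G ((b, b) : Ω × Ω) := by
    intro b c
    obtain ⟨g, hg⟩ := htrans.exists_smul_eq b c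
    exact ⟨g, show g • ((b, b) : Ω × Ω) = (c, c) by rw [Prod.smul_mk, hg]⟩
  have hx12 : x1 ≠ x2 := by
    intro h
    subst h
    exact hdiag x1 (mem_orbit_self _)
  -- the quotient for G
  haveI : Finite (MulAction.orbitRel.Quotient G (Ω × Ω)) := Quotient.finite _
  letI : Fintype (MulAction.orbitRel.Quotient G (Ω × Ω)) := Fintype.ofFinite _
  have hcard4 : (Finset.univ : Finset (MulAction.orbitRel.Quotient G (Ω × Ω))).card = 4 := by
    rw [Finset.card_univ, ← Nat.card_eq_fintype_card]
    exact hrank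
  set d : MulAction.orbitRel.Quotient G (Ω × Ω) := Quotient.mk'' (a₀, a₀) with hd
  set o : MulAction.orbitRel.Quotient G (Ω × Ω) := Quotient.mk'' (x1, x2) with ho
  have hdo : d ≠ o := by
    intro h
    exact hdiag a₀ (orbitRel_apply.mp (Quotient.eq''.mp h))
  have hs : (Finset.univ \ ({d, o} : Finset _)).card = 2 := by
    rw [Finset.card_sdiff_of_subset (Finset.subset_univ _), hcard4, Finset.card_pair hdo]
  obtain ⟨u, v, huv, hs2⟩ := Finset.card_eq_two.mp hs
  set y : Ω × Ω := u.out with hy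
  set z : Ω × Ω := v.out with hz
  have hyu : (Quotient.mk'' y : MulAction.orbitRel.Quotient G (Ω × Ω)) = u := Quotient.out_eq' u
  have hzv : (Quotient.mk'' z : MulAction.orbitRel.Quotient G (Ω × Ω)) = v := Quotient.out_eq' v
  have humem : u ∈ Finset.univ \ ({d, o} : Finset _) := by rw [hs2]; simp
  have hvmem : v ∈ Finset.univ \ ({d, o} : Finset _) := by rw [hs2]; simp
  simp only [Finset.mem_sdiff, Finset.mem_univ, true_and, Finset.mem_insert,
    Finset.mem_singleton, not_or] at humem hvmem
  have hyx : y ∉ orbit G ((x1, x2) : Ω × Ω) := by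
    intro h
    exact humem.2 (by rw [← hyu]; exact Quotient.eq''.mpr (orbitRel_apply.mpr h))
  have hzx : z ∉ orbit G ((x1, x2) : Ω × Ω) := by
    intro h
    exact hvmem.2 (by rw [← hzv]; exact Quotient.eq''.mpr (orbitRel_apply.mpr h))
  have hyd : y.1 ≠ y.2 := by
    intro h
    apply humem.1
    rw [← hyu]
    refine Quotient.eq''.mpr (orbitRel_apply.mpr ?_)
    have := hdiagOrb a₀ y.1
    rwa [show ((y.1, y.1) : Ω × Ω) = y from Prod.ext rfl h] at this
  have hzd : z.1 ≠ z.2 := by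
    intro h
    apply hvmem.1
    rw [← hzv]
    refine Quotient.eq''.mpr (orbitRel_apply.mpr ?_)
    have := hdiagOrb a₀ z.1
    rwa [show ((z.1, z.1) : Ω × Ω) = z from Prod.ext rfl h] at this
  -- every pair lies in one of the four orbits
  have hcover : ∀ p : Ω × Ω, p ∈ orbit G ((a₀, a₀) : Ω × Ω) ∨
      p ∈ orbit G ((x1, x2) : Ω × Ω) ∨ p ∈ orbit G y ∨ p ∈ orbit G z := by
    intro p
    by_cases h1 : (Quotient.mk'' p : MulAction.orbitRel.Quotient G (Ω × Ω)) = d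
    · exact Or.inl (orbitRel_apply.mp (Quotient.eq''.mp h1))
    by_cases h2 : (Quotient.mk'' p : MulAction.orbitRel.Quotient G (Ω × Ω)) = o
    · exact Or.inr (Or.inl (orbitRel_apply.mp (Quotient.eq''.mp h2)))
    have : (Quotient.mk'' p : MulAction.orbitRel.Quotient G (Ω × Ω)) ∈
        Finset.univ \ ({d, o} : Finset _) := by
      simp [h1, h2]
    rw [hs2] at this
    simp only [Finset.mem_insert, Finset.mem_singleton] at this
    rcases this with h3 | h3
    · exact Or.inr (Or.inr (Or.inl (orbitRel_apply.mp (Quotient.eq''.mp (by rw [h3, ← hyu])))))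
    · exact Or.inr (Or.inr (Or.inr (orbitRel_apply.mp (Quotient.eq''.mp (by rw [h3, ← hzv])))))
  -- primitivity of A
  have hApre : IsPretransitive A Ω := by
    constructor
    intro a b
    obtain ⟨g, hg⟩ := htrans.exists_smul_eq a b
    exact ⟨⟨(g : Equiv.Perm Ω), hGA g.2⟩, hg⟩
  have hAprim : IsPrimitivePerm A := by
    refine ⟨hApre, fun B hB => hprim.2 B ?_⟩
    intro g₁ g₂ hne
    exact hB (g₁ := ⟨(g₁ : Equiv.Perm Ω), hGA g₁.2⟩) (g₂ := ⟨(g₂ : Equiv.Perm Ω), hGA g₂.2⟩) hne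
  refine ⟨hAprim, ?_⟩
  -- the two remaining orbits must merge
  by_cases hmerge : z ∈ orbit A y
  · -- rank of A is 3
    haveI : Finite (MulAction.orbitRel.Quotient A (Ω × Ω)) := Quotient.finite _
    letI : Fintype (MulAction.orbitRel.Quotient A (Ω × Ω)) := Fintype.ofFinite _
    set dA : MulAction.orbitRel.Quotient A (Ω × Ω) := Quotient.mk'' (a₀, a₀) with hdA
    set oA : MulAction.orbitRel.Quotient A (Ω × Ω) := Quotient.mk'' (x1, x2) with hoA
    set yA : MulAction.orbitRel.Quotient A (Ω × Ω) := Quotient.mk'' y with hyA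
    have hd1 : dA ≠ oA := by
      intro h
      exact hdiag a₀ (hAsub _ (mem_orbit_self _) (orbitRel_apply.mp (Quotient.eq''.mp h)))
    have hd2 : dA ≠ yA := by
      intro h
      exact hyd (diag_smul_mem (orbitRel_apply.mp (Quotient.eq''.mp h.symm)))
    have hd3 : oA ≠ yA := by
      intro h
      exact hyx (hAsub _ (mem_orbit_self _) (orbitRel_apply.mp (Quotient.eq''.mp h.symm)))
    have hul : (Finset.univ : Finset (MulAction.orbitRel.Quotient A (Ω × Ω))) = {dA, oA, yA} := by
      ext q
      simp only [Finset.mem_univ, true_iff, Finset.mem_insert, Finset.mem_singleton]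
      induction q using Quotient.inductionOn' with
      | h p =>
        rcases hcover p with hp | hp | hp | hp
        · exact Or.inl (Quotient.eq''.mpr (orbitRel_apply.mpr (orbit_mono' hGA _ hp)))
        · exact Or.inr (Or.inl (Quotient.eq''.mpr (orbitRel_apply.mpr (orbit_mono' hGA _ hp))))
        · exact Or.inr (Or.inr (Quotient.eq''.mpr (orbitRel_apply.mpr (orbit_mono' hGA _ hp))))
        · refine Or.inr (Or.inr (Quotient.eq''.mpr (orbitRel_apply.mpr ?_)))
          have h1 : p ∈ orbit A z := orbit_mono' hGA _ hp
          have h2 : orbit A z = orbit A y := orbit_eq_iff.mpr hmerge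
          rw [← h2]; exact h1
    have : permRank A = ({dA, oA, yA} : Finset _).card := by
      rw [permRank, Nat.card_eq_fintype_card, ← Finset.card_univ, hul]
    rw [this]
    rw [Finset.card_insert_of_notMem (by simp [hd1, hd2]),
      Finset.card_insert_of_notMem (by simp [hd3]), Finset.card_singleton]
  · -- otherwise A = G, contradiction
    exfalso
    have hmerge' : ¬ y ∈ orbit A z := fun h => hmerge (mem_orbit_symm.mp h)
    have hAG : A ≤ G := by
      rw [← hclosed]
      intro σ hσ
      rw [mem_twoClosure_iff]
      intro p
      rcases hcover p with hp | hp | hp | hp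
      · have h12 : p.1 = p.2 := diag_smul_mem hp
        obtain ⟨c, rfl⟩ : ∃ c : Ω, p = (c, c) := ⟨p.1, Prod.ext rfl h12.symm⟩
        exact hdiagOrb c (σ c)
      · rw [orbit_eq_iff.mpr hp]
        exact (hAinv σ hσ p).mpr hp
      · rw [orbit_eq_iff.mpr hp]
        rcases hcover (σ • p) with hq | hq | hq | hq
        · exfalso
          have h1 : p.1 ≠ p.2 := offdiag_smul_mem hp hyd
          have h2 : σ p.1 = σ p.2 := diag_smul_mem hq
          exact h1 (σ.injective h2)
        · exfalso
          have : p ∈ orbit G ((x1, x2) : Ω × Ω) := (hAinv σ hσ p).mp hq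
          exact hyx (orbit_eq_iff.mp ((orbit_eq_iff.mpr hp).symm.trans (orbit_eq_iff.mpr this)))
        · exact hq
        · exfalso
          have h1 : σ • p ∈ orbit A y := by
            have hpy : p ∈ orbit A y := orbit_mono' hGA _ hp
            rw [← orbit_eq_iff.mpr hpy]
            exact ⟨⟨σ, hσ⟩, rfl⟩
          have h2 : σ • p ∈ orbit A z := orbit_mono' hGA _ hq
          have e2 : orbit A y = orbit A z :=
            (orbit_eq_iff.mpr h1).symm.trans (orbit_eq_iff.mpr h2)
          exact hmerge (orbit_eq_iff.mp e2.symm)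
      · rw [orbit_eq_iff.mpr hp]
        rcases hcover (σ • p) with hq | hq | hq | hq
        · exfalso
          have h1 : p.1 ≠ p.2 := offdiag_smul_mem hp hzd
          have h2 : σ p.1 = σ p.2 := diag_smul_mem hq
          exact h1 (σ.injective h2)
        · exfalso
          have : p ∈ orbit G ((x1, x2) : Ω × Ω) := (hAinv σ hσ p).mp hq
          exact hzx (orbit_eq_iff.mp ((orbit_eq_iff.mpr hp).symm.trans (orbit_eq_iff.mpr this)))
        · exfalso
          have h1 : σ • p ∈ orbit A z := by
            have hpz : p ∈ orbit A z := orbit_mono' hGA _ hp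
            rw [← orbit_eq_iff.mpr hpz]
            exact ⟨⟨σ, hσ⟩, rfl⟩
          have h2 : σ • p ∈ orbit A y := orbit_mono' hGA _ hq
          have e2 : orbit A z = orbit A y :=
            (orbit_eq_iff.mpr h1).symm.trans (orbit_eq_iff.mpr h2)
          exact hmerge' (orbit_eq_iff.mp e2.symm)
        · exact hq
    exact hnotaut _ (le_antisymm hAG hGA)
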